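/- Let d ≥ 2, L > 0, let f : ℝ^{d−1} → ℝ be a convex L-Lipschitz function (with respect to the Euclidean norm), and let U = {(y, t) ∈ ℝ^{d−1} × ℝ : t ≥ f(y)} be its epigraph. Let q̂ ∈ ℝ^{d−1}, q = (q̂, f(q̂)), let h be a supporting hyperplane of U at q, and let ε > 0. Then every point of h whose vertical projection lies within Euclidean distance ε/(2L) of q̂ belongs to closure(conv(U ∪ {q − ε e_d})); in particular, the closed ball of radius ε/(2L) centered at q̂ is contained in π(h ∩ closure(conv(U ∪ {q − ε e_d}))). -/

import Mathlib

open MeasureTheory Metric Set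
open scoped RealInnerProductSpace ENNReal

noncomputable section

/-- Vertical projection `ℝ^d = ℝ^{d-1} × ℝ → ℝ^{d-1}` (forget the last coordinate). -/
def vproj (n : ℕ) (x : EuclideanSpace ℝ (Fin (n + 1))) : EuclideanSpace ℝ (Fin n) :=
  WithLp.toLp 2 fun j => x j.castSucc

/-- Lift `y ∈ ℝ^{d-1}` and `t ∈ ℝ` to the point `(y, t) ∈ ℝ^d`. -/
def vlift (n : ℕ) (y : EuclideanSpace ℝ (Fin n)) (t : ℝ) : EuclideanSpace ℝ (Fin (n + 1)) :=
  WithLp.toLp 2 fun i => if h : (i : ℕ) < n then y ⟨i, h⟩ else t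

/-- The last standard basis vector `e_d` of `ℝ^d` (`d = n + 1`). -/
def ed (n : ℕ) : EuclideanSpace ℝ (Fin (n + 1)) := EuclideanSpace.single (Fin.last n) 1

/-- The epigraph of `f : ℝ^{d-1} → ℝ` as a subset of `ℝ^d`. -/
def epigraphSet (n : ℕ) (f : EuclideanSpace ℝ (Fin n) → ℝ) :
    Set (EuclideanSpace ℝ (Fin (n + 1))) :=
  {x | f (vproj n x) ≤ x (Fin.last n)}

lemma vproj_vlift (n : ℕ) (y : EuclideanSpace ℝ (Fin n)) (t : ℝ) : vproj n (vlift n y t) = y := by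
  ext j; simp [vproj, vlift, j.isLt]

lemma vlift_last (n : ℕ) (y : EuclideanSpace ℝ (Fin n)) (t : ℝ) : vlift n y t (Fin.last n) = t := by
  simp [vlift]

lemma inner_split (n : ℕ) (u x : EuclideanSpace ℝ (Fin (n + 1))) :
    ⟪u, x⟫ = ⟪vproj n u, vproj n x⟫ + u (Fin.last n) * x (Fin.last n) := by
  simp [PiLp.inner_apply, Fin.sum_univ_castSucc, vproj, RCLike.inner_apply, mul_comm]

lemma ed_castSucc (n : ℕ) (j : Fin n) : ed n j.castSucc = 0 := by
  simp [ed, EuclideanSpace.single_apply, Fin.ne_of_lt (Fin.castSucc_lt_last j)]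

lemma ed_last (n : ℕ) : ed n (Fin.last n) = 1 := by
  simp [ed, EuclideanSpace.single_apply]

lemma mem_epi (n : ℕ) (f : EuclideanSpace ℝ (Fin n) → ℝ) (y : EuclideanSpace ℝ (Fin n)) (t : ℝ)
    (h : f y ≤ t) : vlift n y t ∈ epigraphSet n f := by
  simp [epigraphSet, vproj_vlift, vlift_last, h]

/-- The last coordinate of an (upper-side) supporting functional is negative. -/
lemma clast_neg (n : ℕ) (f : EuclideanSpace ℝ (Fin n) → ℝ)
    (qhat : EuclideanSpace ℝ (Fin n))
    (u : EuclideanSpace ℝ (Fin (n + 1))) (hu : u ≠ 0) (b : ℝ)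
    (hq : ⟪u, vlift n qhat (f qhat)⟫ = b)
    (hle : ∀ x ∈ epigraphSet n f, ⟪u, x⟫ ≤ b) :
    u (Fin.last n) < 0 := by
  set c : ℝ := u (Fin.last n) with hcdef
  set uh : EuclideanSpace ℝ (Fin n) := vproj n u with huh
  have key : ∀ (y : EuclideanSpace ℝ (Fin n)) (t : ℝ), f y ≤ t → ⟪uh, y⟫ + c * t ≤ b := by
    intro y t h
    have := hle (vlift n y t) (mem_epi n f y t h)
    rwa [inner_split, vproj_vlift, vlift_last] at this
  have hb : ⟪uh, qhat⟫ + c * f qhat = b := by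
    rw [← hq, inner_split, vproj_vlift, vlift_last]
  have hc0 : c ≤ 0 := by
    have h1 := key qhat (f qhat + 1) (by linarith)
    have h2 : c * (f qhat + 1) = c * f qhat + c := by ring
    linarith
  have hcne : c ≠ 0 := by
    intro hc
    have huh0 : uh = 0 := by
      have h1 := key (qhat + uh) (f (qhat + uh)) le_rfl
      rw [hc] at h1 hb
      rw [inner_add_right] at h1
      have : ⟪uh, uh⟫ ≤ 0 := by linarith
      exact real_inner_self_nonpos.mp this
    apply hu
    ext i
    refine Fin.lastCases ?_ ?_ i
    · exact hc
    · intro j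
      have := congrArg (fun v => v j) huh0
      simpa [huh, vproj] using this
  exact lt_of_le_of_ne hc0 hcne

/-- Slope bound: a point of the supporting hyperplane lies above `f q̂ - L·dist`. -/
lemma hyperplane_low (n : ℕ) (L : ℝ)
    (f : EuclideanSpace ℝ (Fin n) → ℝ)
    (hlip : ∀ y y' : EuclideanSpace ℝ (Fin n), |f y - f y'| ≤ L * ‖y - y'‖)
    (qhat : EuclideanSpace ℝ (Fin n))
    (u : EuclideanSpace ℝ (Fin (n + 1))) (hu : u ≠ 0) (b : ℝ)
    (hq : ⟪u, vlift n qhat (f qhat)⟫ = b)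
    (hle : ∀ x ∈ epigraphSet n f, ⟪u, x⟫ ≤ b)
    (x : EuclideanSpace ℝ (Fin (n + 1))) (hx : ⟪u, x⟫ = b) :
    f qhat - L * ‖vproj n x - qhat‖ ≤ x (Fin.last n) := by
  set c : ℝ := u (Fin.last n) with hcdef
  set uh : EuclideanSpace ℝ (Fin n) := vproj n u with huh
  have key : ∀ (y : EuclideanSpace ℝ (Fin n)) (t : ℝ), f y ≤ t → ⟪uh, y⟫ + c * t ≤ b := by
    intro y t h
    have := hle (vlift n y t) (mem_epi n f y t h)
    rwa [inner_split, vproj_vlift, vlift_last] at this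
  have hb : ⟪uh, qhat⟫ + c * f qhat = b := by
    rw [← hq, inner_split, vproj_vlift, vlift_last]
  have hcneg : c < 0 := clast_neg n f qhat u hu b hq hle
  set w : EuclideanSpace ℝ (Fin n) := vproj n x - qhat with hw
  have hsup := key (qhat - w) (f (qhat - w)) le_rfl
  have hlipw : f (qhat - w) ≤ f qhat + L * ‖w‖ := by
    have := abs_le.mp (hlip qhat (qhat - w))
    have hnn : ‖qhat - (qhat - w)‖ = ‖w‖ := by rw [sub_sub_cancel]
    rw [hnn] at this
    linarith [this.1]
  have hxs : ⟪uh, qhat⟫ + ⟪uh, w⟫ + c * x (Fin.last n) = b := by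
    have h0 : ⟪uh, vproj n x⟫ + c * x (Fin.last n) = b := by
      rw [← hx, inner_split]
    have h1 : ⟪uh, w⟫ = ⟪uh, vproj n x⟫ - ⟪uh, qhat⟫ := by
      rw [hw, inner_sub_right]
    linarith
  have hsup' : ⟪uh, qhat⟫ - ⟪uh, w⟫ + c * f (qhat - w) ≤ b := by
    rwa [inner_sub_right] at hsup
  have hinw : ⟪uh, w⟫ = c * (f qhat - x (Fin.last n)) := by linarith [hb, hxs]
  have hcomb : c * f (qhat - w) ≤ c * f qhat + c * (f qhat - x (Fin.last n)) := by
    linarith [hsup', hb, hinw]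
  have hdiv : f qhat + (f qhat - x (Fin.last n)) ≤ f (qhat - w) := by
    have hcomb2 : c * f (qhat - w) ≤ c * (f qhat + (f qhat - x (Fin.last n))) := by
      have hexp : c * (f qhat + (f qhat - x (Fin.last n)))
          = c * f qhat + c * (f qhat - x (Fin.last n)) := by ring
      linarith
    exact (mul_le_mul_left_of_neg hcneg).mp hcomb2
  linarith [hlipw, hdiv]

/-- Interior case: strict inequality gives membership in the convex hull itself. -/
lemma interior_mem (n : ℕ) (L : ℝ) (hL : 0 < L)
    (f : EuclideanSpace ℝ (Fin n) → ℝ)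
    (hlip : ∀ y y' : EuclideanSpace ℝ (Fin n), |f y - f y'| ≤ L * ‖y - y'‖)
    (qhat : EuclideanSpace ℝ (Fin n)) (ε : ℝ) (hε : 0 < ε)
    (x : EuclideanSpace ℝ (Fin (n + 1)))
    (hlow : f qhat - L * ‖vproj n x - qhat‖ ≤ x (Fin.last n))
    (hball : ‖vproj n x - qhat‖ < ε / (2 * L)) :
    x ∈ convexHull ℝ (epigraphSet n f ∪ {vlift n qhat (f qhat) - ε • ed n}) := by
  set r : ℝ := ‖vproj n x - qhat‖ with hr
  have hr0 : 0 ≤ r := norm_nonneg _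
  set δ : ℝ := ε - 2 * L * r with hδ
  have hδ0 : 0 < δ := by
    have : 2 * L * r < ε := by
      have := (lt_div_iff₀ (by positivity : (0:ℝ) < 2 * L)).mp hball
      linarith
    linarith
  set t : ℝ := ε / δ with htdef
  have ht0 : 0 < t := div_pos hε hδ0
  have ht1 : 1 ≤ t := by
    rw [htdef, le_div_iff₀ hδ0]; nlinarith [mul_nonneg hL.le hr0]
  have htδ : t * δ = ε := div_mul_cancel₀ ε hδ0.ne'
  set p : EuclideanSpace ℝ (Fin (n + 1)) := vlift n qhat (f qhat) - ε • ed n with hp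
  set z : EuclideanSpace ℝ (Fin (n + 1)) := p + t • (x - p) with hzdef
  have hpproj : vproj n p = qhat := by
    ext j
    simp [vproj, hp, vlift, j.isLt, ed_castSucc n j]
  have hplast : p (Fin.last n) = f qhat - ε := by
    simp [hp, vlift_last, ed_last]
  have hzproj : vproj n z = qhat + t • (vproj n x - qhat) := by
    ext j
    have hpj : p j.castSucc = qhat j := congrArg (fun v => v j) hpproj
    simp [vproj, hzdef, hpj]
  have hzlast : z (Fin.last n) = (f qhat - ε) + t * (x (Fin.last n) - (f qhat - ε)) := by
    simp [hzdef, hplast]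
  have hzmem : z ∈ epigraphSet n f := by
    have h1 : f (vproj n z) ≤ f qhat + L * (t * r) := by
      have := hlip (vproj n z) qhat
      rw [hzproj] at this ⊢
      have hn : ‖qhat + t • (vproj n x - qhat) - qhat‖ = t * r := by
        rw [add_sub_cancel_left, norm_smul, Real.norm_eq_abs, abs_of_pos ht0]
      rw [hn] at this
      have := abs_le.mp this
      linarith [this.1]
    have h3 : t * (x (Fin.last n) - f qhat) ≥ t * (-(L * r)) :=
      mul_le_mul_of_nonneg_left (by linarith) ht0.le
    have h4 : t * δ = t * ε - 2 * (L * (t * r)) := by rw [hδ]; ring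
    show f (vproj n z) ≤ z (Fin.last n)
    rw [hzlast]
    have h5 : t * (x (Fin.last n) - (f qhat - ε)) = t * (x (Fin.last n) - f qhat) + t * ε := by
      ring
    linarith
  have hab : (1 - 1/t) + 1/t = 1 := by ring
  have ha : 0 ≤ 1 - 1/t := by
    have : 1/t ≤ 1 := by rw [div_le_one ht0]; exact ht1
    linarith
  have hb : 0 ≤ 1/t := by positivity
  have hxc : x = (1 - 1/t) • p + (1/t) • z := by
    rw [hzdef, smul_add, smul_smul, one_div_mul_cancel ht0.ne', one_smul]
    module
  rw [hxc]
  have hpmem : p ∈ convexHull ℝ (epigraphSet n f ∪ {vlift n qhat (f qhat) - ε • ed n}) :=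
    subset_convexHull ℝ _ (Or.inr rfl)
  have hzm : z ∈ convexHull ℝ (epigraphSet n f ∪ {vlift n qhat (f qhat) - ε • ed n}) :=
    subset_convexHull ℝ _ (Or.inl hzmem)
  exact (convex_convexHull ℝ _) hpmem hzm ha hb hab

/-- One-sided version of the main theorem. -/
lemma one_sided (n : ℕ) (L : ℝ) (hL : 0 < L)
    (f : EuclideanSpace ℝ (Fin n) → ℝ)
    (hlip : ∀ y y' : EuclideanSpace ℝ (Fin n), |f y - f y'| ≤ L * ‖y - y'‖)
    (qhat : EuclideanSpace ℝ (Fin n)) (ε : ℝ) (hε : 0 < ε)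
    (u : EuclideanSpace ℝ (Fin (n + 1))) (hu : u ≠ 0) (b : ℝ)
    (hq : ⟪u, vlift n qhat (f qhat)⟫ = b)
    (hle : ∀ x ∈ epigraphSet n f, ⟪u, x⟫ ≤ b) :
    (∀ x : EuclideanSpace ℝ (Fin (n + 1)), ⟪u, x⟫ = b →
      dist (vproj n x) qhat ≤ ε / (2 * L) →
      x ∈ closure (convexHull ℝ
            (epigraphSet n f ∪ {vlift n qhat (f qhat) - ε • ed n}))) ∧
    closedBall qhat (ε / (2 * L)) ⊆
      vproj n '' ({x | ⟪u, x⟫ = b} ∩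
        closure (convexHull ℝ
          (epigraphSet n f ∪ {vlift n qhat (f qhat) - ε • ed n}))) := by
  have hrad : 0 < ε / (2 * L) := by positivity
  have part1 : ∀ x : EuclideanSpace ℝ (Fin (n + 1)), ⟪u, x⟫ = b →
      dist (vproj n x) qhat ≤ ε / (2 * L) →
      x ∈ closure (convexHull ℝ
            (epigraphSet n f ∪ {vlift n qhat (f qhat) - ε • ed n})) := by
    intro x hx hdist
    have hlow := hyperplane_low n L f hlip qhat u hu b hq hle x hx
    have hwd : ‖vproj n x - qhat‖ ≤ ε / (2 * L) := by
      rwa [dist_eq_norm] at hdist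
    set q : EuclideanSpace ℝ (Fin (n + 1)) := vlift n qhat (f qhat) with hqd
    -- points along the segment from q to x
    have hmem : ∀ θ : ℝ, 0 ≤ θ → θ < 1 →
        q + θ • (x - q) ∈ convexHull ℝ
          (epigraphSet n f ∪ {vlift n qhat (f qhat) - ε • ed n}) := by
      intro θ hθ0 hθ1
      set x' : EuclideanSpace ℝ (Fin (n + 1)) := q + θ • (x - q) with hx'
      have hproj' : vproj n x' - qhat = θ • (vproj n x - qhat) := by
        ext j
        have hqj : q j.castSucc = qhat j := congrArg (fun v => v j) (vproj_vlift n qhat (f qhat))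
        simp [vproj, hx', hqj]
      have hnorm' : ‖vproj n x' - qhat‖ = θ * ‖vproj n x - qhat‖ := by
        rw [hproj', norm_smul, Real.norm_eq_abs, abs_of_nonneg hθ0]
      have hlast' : x' (Fin.last n) = f qhat + θ * (x (Fin.last n) - f qhat) := by
        simp [hx', hqd, vlift_last]
      refine interior_mem n L hL f hlip qhat ε hε x' ?_ ?_
      · rw [hnorm', hlast']
        have := mul_le_mul_of_nonneg_left hlow hθ0
        nlinarith [hlow, hθ0]
      · rw [hnorm']
        calc θ * ‖vproj n x - qhat‖ ≤ θ * (ε / (2 * L)) :=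
              mul_le_mul_of_nonneg_left hwd hθ0
          _ < 1 * (ε / (2 * L)) := by
              exact mul_lt_mul_of_pos_right hθ1 hrad
          _ = ε / (2 * L) := one_mul _
    -- x is the limit of these points as θ → 1
    have htend : Filter.Tendsto
        (fun k : ℕ => q + (1 - 1 / (k + 1 : ℝ)) • (x - q)) Filter.atTop (nhds x) := by
      have h1 : Filter.Tendsto (fun k : ℕ => 1 - 1 / (k + 1 : ℝ)) Filter.atTop (nhds 1) := by
        have := tendsto_one_div_add_atTop_nhds_zero_nat (𝕜 := ℝ)
        have h2 := Filter.Tendsto.const_sub (1 : ℝ) this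
        simpa using h2
      have hc : Continuous fun θ : ℝ => q + θ • (x - q) :=
        continuous_const.add (continuous_id.smul continuous_const)
      have := (hc.tendsto 1).comp h1
      simpa [Function.comp_def] using this
    refine mem_closure_of_tendsto htend ?_
    filter_upwards with k
    refine hmem _ ?_ ?_
    · have : 1 / (k + 1 : ℝ) ≤ 1 := by
        rw [div_le_one (by positivity)]
        linarith [Nat.cast_nonneg (α := ℝ) k]
      linarith
    · have : 0 < 1 / (k + 1 : ℝ) := by positivity
      linarith
  refine ⟨part1, ?_⟩
  intro y hy
  have hcneg : u (Fin.last n) < 0 := clast_neg n f qhat u hu b hq hle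
  set c : ℝ := u (Fin.last n) with hcdef
  set x : EuclideanSpace ℝ (Fin (n + 1)) := vlift n y ((b - ⟪vproj n u, y⟫) / c) with hxd
  have hxhyp : ⟪u, x⟫ = b := by
    have hcc : c * ((b - ⟪vproj n u, y⟫) / c) = b - ⟪vproj n u, y⟫ := by
      rw [mul_comm]; exact div_mul_cancel₀ _ hcneg.ne
    rw [inner_split, hxd, vproj_vlift, vlift_last, ← hcdef, hcc]
    ring
  have hxdist : dist (vproj n x) qhat ≤ ε / (2 * L) := by
    rw [hxd, vproj_vlift]
    exact mem_closedBall.mp hy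
  exact ⟨x, ⟨hxhyp, part1 x hxhyp hxdist⟩, by rw [hxd, vproj_vlift]⟩

/-- for the epigraph `U` of a convex `L`-Lipschitz function `f`, a boundary
point `q = (q̂, f(q̂))` and a supporting hyperplane `h` of `U` at `q`, every point of `h`
whose vertical projection is within distance `ε/(2L)` of `q̂` lies in
`closure(conv(U ∪ {q − ε e_d}))`; in particular the closed ball of radius `ε/(2L)` around
`q̂` is contained in the projection of `h ∩ closure(conv(U ∪ {q − ε e_d}))`. -/
theorem dual_cap_base_contains_ball (n : ℕ) (hn : 1 ≤ n) (L : ℝ) (hL : 0 < L)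
    (f : EuclideanSpace ℝ (Fin n) → ℝ) (hconv : ConvexOn ℝ Set.univ f)
    (hlip : ∀ y y' : EuclideanSpace ℝ (Fin n), |f y - f y'| ≤ L * ‖y - y'‖)
    (qhat : EuclideanSpace ℝ (Fin n)) (ε : ℝ) (hε : 0 < ε)
    (u : EuclideanSpace ℝ (Fin (n + 1))) (hu : u ≠ 0) (b : ℝ)
    (hqmem : ⟪u, vlift n qhat (f qhat)⟫ = b)
    (hside : (∀ x ∈ epigraphSet n f, ⟪u, x⟫ ≤ b) ∨ (∀ x ∈ epigraphSet n f, b ≤ ⟪u, x⟫)) :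
    (∀ x : EuclideanSpace ℝ (Fin (n + 1)), ⟪u, x⟫ = b →
      dist (vproj n x) qhat ≤ ε / (2 * L) →
      x ∈ closure (convexHull ℝ
            (epigraphSet n f ∪ {vlift n qhat (f qhat) - ε • ed n}))) ∧
    closedBall qhat (ε / (2 * L)) ⊆
      vproj n '' ({x | ⟪u, x⟫ = b} ∩
        closure (convexHull ℝ
          (epigraphSet n f ∪ {vlift n qhat (f qhat) - ε • ed n}))) := by
  rcases hside with hle | hge
  · exact one_sided n L hL f hlip qhat ε hε u hu b hqmem hle
  · have hu' : (-u : EuclideanSpace ℝ (Fin (n + 1))) ≠ 0 := neg_ne_zero.mpr hu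
    have hq' : ⟪-u, vlift n qhat (f qhat)⟫ = -b := by
      rw [inner_neg_left, hqmem]
    have hle' : ∀ x ∈ epigraphSet n f, ⟪-u, x⟫ ≤ -b := by
      intro x hx
      rw [inner_neg_left]
      linarith [hge x hx]
    have h := one_sided n L hL f hlip qhat ε hε (-u) hu' (-b) hq' hle'
    have hset : {x : EuclideanSpace ℝ (Fin (n + 1)) | ⟪-u, x⟫ = -b}
        = {x : EuclideanSpace ℝ (Fin (n + 1)) | ⟪u, x⟫ = b} := by
      ext z
      simp [inner_neg_left]
    rw [hset] at h
    refine ⟨fun x hx hd => h.1 x (by rw [inner_neg_left, hx]) hd, h.2⟩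

end
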